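/- Let n ≥ 1, let Γ ⊆ ℝⁿ be a convex cone containing the open positive octant Γₙ, and let f : ℝⁿ → ℝ be concave on Γ and positively homogeneous of degree one on Γ. Let λ ∈ Γ be a point at which f is differentiable with all partial derivatives ∂f/∂λⱼ(λ) > 0. Suppose there is γ > 0 such that f(μ) ≥ n·γ^{1/n}·(∏ⱼ μⱼ)^{1/n} for all μ ∈ Γₙ. Then ∏ⱼ₌₁ⁿ ∂f/∂λⱼ(λ) ≥ γ. -/

import Mathlib

/-- Lemma of Guo–Phong–Tong: determinant domination implies the structural
lower bound on the product of partial derivatives. -/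
theorem product_of_partials_ge_of_determinant_domination
    {n : ℕ} (hn : 1 ≤ n) (Γ : Set (Fin n → ℝ)) (f : (Fin n → ℝ) → ℝ)
    (hcone : ∀ t : ℝ, 0 < t → ∀ x ∈ Γ, t • x ∈ Γ)
    (hconvex : Convex ℝ Γ)
    (hoctant : ∀ μ : Fin n → ℝ, (∀ j, 0 < μ j) → μ ∈ Γ)
    (hconcave : ConcaveOn ℝ Γ f)
    (hhom : ∀ t : ℝ, 0 < t → ∀ x ∈ Γ, f (t • x) = t * f x)
    (lam : Fin n → ℝ) (hlam : lam ∈ Γ)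
    (hdiff : DifferentiableAt ℝ f lam)
    (hpos : ∀ j, 0 < fderiv ℝ f lam (Pi.single j 1))
    (γ : ℝ) (hγ : 0 < γ)
    (hdom : ∀ μ : Fin n → ℝ, (∀ j, 0 < μ j) →
      (n : ℝ) * γ ^ ((1 : ℝ) / n) * (∏ j, μ j) ^ ((1 : ℝ) / n) ≤ f μ) :
    γ ≤ ∏ j, fderiv ℝ f lam (Pi.single j 1) := by
  set L := fderiv ℝ f lam with hL
  have hnpos : (0 : ℝ) < n := by exact_mod_cast hn
  -- Step A: Euler's relation  L lam = f lam
  have euler : L lam = f lam := by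
    have hcurve : HasDerivAt (fun t : ℝ => t • lam) lam 1 := by
      simpa using (hasDerivAt_id (1 : ℝ)).smul_const lam
    have hφ : HasDerivAt (fun t : ℝ => f (t • lam)) (L lam) 1 := by
      have h0 : HasFDerivAt f L ((1:ℝ) • lam) := by simpa using hdiff.hasFDerivAt
      exact h0.comp_hasDerivAt 1 hcurve
    have hφ' : HasDerivAt (fun t : ℝ => f (t • lam)) (f lam) 1 := by
      have heq : (fun t : ℝ => t * f lam) =ᶠ[nhds (1 : ℝ)] fun t => f (t • lam) := by
        filter_upwards [eventually_gt_nhds (show (0:ℝ) < 1 by norm_num)] with t ht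
        exact (hhom t ht lam hlam).symm
      have : HasDerivAt (fun t : ℝ => t * f lam) (f lam) 1 := by
        simpa using (hasDerivAt_id (1 : ℝ)).mul_const (f lam)
      exact this.congr_of_eventuallyEq heq.symm
    exact hφ.unique hφ'
  -- Step B: concavity gives the tangent bound  f μ ≤ L μ on Γ.
  have tangent : ∀ μ ∈ Γ, f μ ≤ L μ := by
    intro μ hμ
    set v := μ - lam with hv
    have hcurve : ∀ s : ℝ, HasDerivAt (fun s : ℝ => lam + s • v) v s := by
      intro s
      simpa using ((hasDerivAt_id s).smul_const v).const_add lam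
    have hh : HasDerivAt (fun s : ℝ => f (lam + s • v)) (L v) 0 := by
      have h0 : HasFDerivAt f L (lam + (0:ℝ) • v) := by simpa using hdiff.hasFDerivAt
      exact h0.comp_hasDerivAt 0 (hcurve 0)
    -- slope bound from concavity
    have hslope : ∀ s : ℝ, s ∈ Set.Ioc (0:ℝ) 1 →
        f μ - f lam ≤ (f (lam + s • v) - f lam) / s := by
      intro s hs
      have h1 : (1 - s) • lam + s • μ = lam + s • v := by
        rw [hv]; module
      have hc := hconcave.2 hlam hμ (by linarith [hs.2] : (0:ℝ) ≤ 1 - s)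
        (le_of_lt hs.1) (by ring)
      rw [h1] at hc
      simp only [smul_eq_mul] at hc
      rw [le_div_iff₀ hs.1]
      nlinarith [hc]
    have htend : Filter.Tendsto (fun s : ℝ => (f (lam + s • v) - f lam) / s)
        (nhdsWithin 0 (Set.Ioi 0)) (nhds (L v)) := by
      have := hasDerivAt_iff_tendsto_slope.mp hh
      have h2 : Filter.Tendsto (slope (fun s : ℝ => f (lam + s • v)) 0)
          (nhdsWithin 0 (Set.Ioi 0)) (nhds (L v)) :=
        this.mono_left (nhdsWithin_mono _ fun x hx => ne_of_gt hx)
      refine Filter.Tendsto.congr' ?_ h2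
      filter_upwards [self_mem_nhdsWithin] with s hs
      simp [slope_def_field]
    have hle : f μ - f lam ≤ L v := by
      refine ge_of_tendsto htend ?_
      filter_upwards [Ioc_mem_nhdsGT_of_mem (Set.left_mem_Ico.mpr (by norm_num : (0:ℝ) < 1))]
        with s hs
      exact hslope s hs
    have : L v = L μ - f lam := by
      rw [hv, map_sub, euler]
    linarith [hle, this ▸ hle]
  -- Step C: choose μ j = (L (Pi.single j 1))⁻¹.
  set a : Fin n → ℝ := fun j => L (Pi.single j 1) with ha
  have hapos : ∀ j, 0 < a j := hpos
  set μ : Fin n → ℝ := fun j => (a j)⁻¹ with hμdef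
  have hμpos : ∀ j, 0 < μ j := fun j => inv_pos.mpr (hapos j)
  have hLμ : L μ = n := by
    have hμsum : μ = ∑ j, μ j • (Pi.single j 1 : Fin n → ℝ) := by
      funext i
      simp [Finset.sum_apply, Pi.single_apply]
    rw [hμsum, map_sum]
    simp only [map_smul, smul_eq_mul]
    have h1 : ∀ j ∈ Finset.univ, μ j * L (Pi.single j 1) = 1 :=
      fun j _ => inv_mul_cancel₀ (ne_of_gt (hapos j))
    rw [Finset.sum_congr rfl h1]
    simp
  have hfμ := hdom μ hμpos
  have hfL := tangent μ (hoctant μ hμpos)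
  have hP : (0:ℝ) < ∏ j, a j := Finset.prod_pos fun j _ => hapos j
  have hprodinv : (∏ j, μ j) = (∏ j, a j)⁻¹ := by
    show (∏ j, (a j)⁻¹) = (∏ j, a j)⁻¹
    exact Finset.prod_inv_distrib _
  have key : (n : ℝ) * γ ^ ((1:ℝ)/n) * ((∏ j, a j)⁻¹) ^ ((1:ℝ)/n) ≤ n := by
    calc (n : ℝ) * γ ^ ((1:ℝ)/n) * ((∏ j, a j)⁻¹) ^ ((1:ℝ)/n)
        = (n : ℝ) * γ ^ ((1:ℝ)/n) * (∏ j, μ j) ^ ((1:ℝ)/n) := by rw [hprodinv]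
      _ ≤ f μ := hfμ
      _ ≤ L μ := hfL
      _ = n := hLμ
  -- unwind: γ^{1/n} ≤ P^{1/n}  hence  γ ≤ P
  have hinv : ((∏ j, a j)⁻¹ : ℝ) ^ ((1:ℝ)/n) = ((∏ j, a j) ^ ((1:ℝ)/n))⁻¹ := by
    rw [Real.inv_rpow hP.le]
  have hPpow : (0:ℝ) < (∏ j, a j) ^ ((1:ℝ)/n) := Real.rpow_pos_of_pos hP _
  have hγpow : γ ^ ((1:ℝ)/n) ≤ (∏ j, a j) ^ ((1:ℝ)/n) := by
    rw [hinv] at key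
    have h1 : γ ^ ((1:ℝ)/n) / (∏ j, a j) ^ ((1:ℝ)/n) ≤ 1 := by
      rw [div_eq_mul_inv]
      nlinarith [key, hnpos]
    exact (div_le_one hPpow).mp h1
  have := Real.rpow_le_rpow (Real.rpow_nonneg hγ.le _) hγpow (le_of_lt hnpos)
  rwa [← Real.rpow_mul hγ.le, ← Real.rpow_mul hP.le, one_div,
    inv_mul_cancel₀ (ne_of_gt hnpos), Real.rpow_one, Real.rpow_one] at this
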